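/- Let f : ℝ^d → ℝ be a Schwartz function with f(0) > 0, f̂(0) > 0, f(x) ≤ 0 for |x| ≥ r, and f̂ ≥ 0 everywhere. Suppose μ = δ_0 + ν is a tempered distribution with ν a nonnegative measure supported in {x : |x| ≥ r}, and suppose μ̂ ≥ c·δ_0 as distributions (meaning μ̂ − c·δ_0 is a nonnegative measure) for some c > 0. Then f(0)/f̂(0) ≥ c. -/

import Mathlib

open MeasureTheory FourierTransform SchwartzMap

/-- **Dual linear programming bound.**
Let `μ = δ₀ + ν` be a tempered distribution on `ℝ^d`, where `ν` is a nonnegative measure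
supported in `{x : ‖x‖ ≥ r}` against which all Schwartz functions are integrable.  Suppose
`μ̂ ≥ c·δ₀` in the sense that `μ̂ = c·δ₀ + ν'` for a nonnegative measure `ν'`, i.e. for every
Schwartz function `g`, `⟨μ, 𝓕 g⟩ = c·g(0) + ∫ g dν'` (the left side being the pairing of `μ̂`
with `g`, defined by duality), with `c > 0`.  Then every real-valued Schwartz function `f`
with `f 0 > 0`, `𝓕 f 0 > 0`, `f x ≤ 0` for `‖x‖ ≥ r`, and `𝓕 f ≥ 0` everywhere satisfies
`f 0 / 𝓕 f 0 ≥ c`. -/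
theorem dual_lp_bound
    (d : ℕ) (r c : ℝ) (hr : 0 < r) (hc : 0 < c)
    (ν ν' : Measure (EuclideanSpace ℝ (Fin d)))
    (hsupp : ν {x | ‖x‖ < r} = 0)
    (hνint : ∀ g : 𝓢(EuclideanSpace ℝ (Fin d), ℂ), Integrable (⇑g) ν)
    (hν'int : ∀ g : 𝓢(EuclideanSpace ℝ (Fin d), ℂ), Integrable (⇑g) ν')
    (hμhat : ∀ g : 𝓢(EuclideanSpace ℝ (Fin d), ℂ),
      (𝓕 ⇑g) 0 + ∫ x, (𝓕 ⇑g) x ∂ν = c • g 0 + ∫ x, g x ∂ν')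
    (f : 𝓢(EuclideanSpace ℝ (Fin d), ℂ))
    (hreal : ∀ x, (f x).im = 0)
    (hf0 : 0 < (f 0).re)
    (hfhat0 : 0 < ((𝓕 ⇑f) 0).re)
    (hfhatreal : ∀ y, ((𝓕 ⇑f) y).im = 0)
    (hneg : ∀ x, r ≤ ‖x‖ → (f x).re ≤ 0)
    (hpos : ∀ y, 0 ≤ ((𝓕 ⇑f) y).re) :
    c ≤ (f 0).re / ((𝓕 ⇑f) 0).re := by
  set g : 𝓢(EuclideanSpace ℝ (Fin d), ℂ) := (fourierTransformCLE ℂ 𝓢(EuclideanSpace ℝ (Fin d), ℂ) (F := 𝓢(EuclideanSpace ℝ (Fin d), ℂ))).symm f with hg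
  have hgc : ⇑g = 𝓕⁻ ⇑f := by
    rw [hg]; exact fourierInv_coe f
  have hFg : 𝓕 ⇑g = ⇑f := by
    have : ⇑(fourierTransformCLE ℂ 𝓢(EuclideanSpace ℝ (Fin d), ℂ) (F := 𝓢(EuclideanSpace ℝ (Fin d), ℂ)) g) = 𝓕 ⇑g := by
      exact fourier_coe g
    rw [← this, hg, (fourierTransformCLE ℂ 𝓢(EuclideanSpace ℝ (Fin d), ℂ) (F := 𝓢(EuclideanSpace ℝ (Fin d), ℂ))).apply_symm_apply]
  have hg0 : g 0 = (𝓕 ⇑f) 0 := by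
    have := congrFun hgc 0
    rw [this, Real.fourierInv_eq_fourier_neg, neg_zero]
  have hgpos : ∀ x, 0 ≤ (g x).re := by
    intro x
    rw [congrFun hgc x, Real.fourierInv_eq_fourier_neg]
    exact hpos _
  have key := hμhat g
  rw [hFg, hg0] at key
  have hre := congrArg Complex.re key
  simp only [Complex.add_re, Complex.real_smul, Complex.mul_re, Complex.ofReal_re,
    Complex.ofReal_im, zero_mul, sub_zero] at hre
  have hi1 : (∫ x, f x ∂ν).re = ∫ x, (f x).re ∂ν := (integral_re (hνint f)).symm
  have hi2 : (∫ x, g x ∂ν').re = ∫ x, (g x).re ∂ν' := (integral_re (hν'int g)).symm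
  rw [hi1, hi2] at hre
  have h1 : ∫ x, (f x).re ∂ν ≤ 0 := by
    apply integral_nonpos_of_ae
    have : ∀ᵐ x ∂ν, r ≤ ‖x‖ := by
      rw [ae_iff]
      refine measure_mono_null (fun x hx => ?_) hsupp
      simpa using not_le.mp hx
    filter_upwards [this] with x hx using hneg x hx
  have h2 : 0 ≤ ∫ x, (g x).re ∂ν' := integral_nonneg fun x => hgpos x
  have hmain : c * ((𝓕 ⇑f) 0).re ≤ (f 0).re := by nlinarith
  rw [le_div_iff₀ hfhat0]
  exact hmain
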